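/- Let 𝕏 be an agenda over m issues and F an aggregation mechanism for 𝕏 over n voters with DI(F) ≤ δ. Then there exists an independent aggregation mechanism H for 𝕏 over n voters such that d(F,H) ≤ 2mδ. -/
import Mathlib


namespace JudgementAggregation

open Finset

open Classical in
noncomputable def prob {α : Type*} (s : Finset α) (P : α → Prop) : ℝ :=
  ((s.filter P).card : ℝ) / s.card

abbrev Opinion (m : ℕ) := Fin m → Bool
abbrev Profile (m n : ℕ) := Fin n → Opinion m
abbrev Mechanism (m n : ℕ) := Profile m n → Opinion m

/-- The column of all voters' answers on issue `j`. -/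
def col {m n : ℕ} (Y : Profile m n) (j : Fin m) : Fin n → Bool := fun i => Y i j

/-- The set of profiles all of whose rows are consistent opinions (i.e. the set 𝕏^n). -/
def profiles {m : ℕ} (X : Finset (Opinion m)) (n : ℕ) : Finset (Profile m n) :=
  Fintype.piFinset fun _ => X

/-- Inconsistency index: probability (uniform over 𝕏^n) that the aggregated opinion
is inconsistent. -/
noncomputable def IC {m n : ℕ} (X : Finset (Opinion m)) (F : Mechanism m n) : ℝ :=
  prob (profiles X n) (fun Y => F Y ∉ X)

/-- Distance between mechanisms: probability (uniform over 𝕏^n) of disagreement. -/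
noncomputable def mdist {m n : ℕ} (X : Finset (Opinion m)) (F G : Mechanism m n) : ℝ :=
  prob (profiles X n) (fun Y => F Y ≠ G Y)

/-- `F` is independent: on consistent profiles, each issue is aggregated from its own column. -/
def Independent {m n : ℕ} (X : Finset (Opinion m)) (F : Mechanism m n) : Prop :=
  ∃ f : Fin m → (Fin n → Bool) → Bool, ∀ Y ∈ profiles X n, ∀ j, F Y j = f j (col Y j)

open Classical in
/-- Dependency index of issue `j`:
`E_X [ Pr_Y [ (F X)^j ≠ (F Y)^j | Y^j = X^j ] ]`, everything uniform over 𝕏^n. -/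
noncomputable def DIj {m n : ℕ} (X : Finset (Opinion m)) (F : Mechanism m n) (j : Fin m) : ℝ :=
  (∑ Y ∈ profiles X n,
      prob ((profiles X n).filter (fun Z => col Z j = col Y j)) (fun Z => F Z j ≠ F Y j))
    / ((profiles X n).card : ℝ)

/-- Dependency index: the maximum of the issue-wise dependency indices. -/
noncomputable def DI {m n : ℕ} (X : Finset (Opinion m)) (F : Mechanism m n) : ℝ :=
  ⨆ j : Fin m, DIj X F j

lemma prob_nonneg {α : Type*} (s : Finset α) (P : α → Prop) : 0 ≤ prob s P := by
  unfold prob; positivity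

lemma prob_eq {α : Type*} (s : Finset α) (P : α → Prop) [DecidablePred P] :
    prob s P = ((s.filter P).card : ℝ) / s.card := by
  unfold prob
  congr!

lemma half_le_prob {γ : Type*} (T : Finset γ) (P : γ → Prop) [DecidablePred P]
    (hT : T.Nonempty) (h : T.card ≤ 2 * (T.filter P).card) :
    (1:ℝ)/2 ≤ prob T P := by
  have ht : (0:ℝ) < T.card := by exact_mod_cast Finset.card_pos.mpr hT
  rw [prob_eq, le_div_iff₀ ht]
  have : ((T.card : ℝ)) ≤ 2 * ((T.filter P).card : ℝ) := by exact_mod_cast h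
  linarith

/-- if `DI(F) ≤ δ` then `F` is `2mδ`-close to an independent mechanism. -/
theorem DI_close_independent (m n : ℕ) (X : Finset (Opinion m)) (hne : X.Nonempty)
    (F : Mechanism m n) (δ : ℝ) (hDI : DI X F ≤ δ) :
    ∃ H : Mechanism m n, Independent X H ∧ mdist X F H ≤ 2 * (m : ℝ) * δ := by
  classical
  set S := profiles X n with hSdef
  have hS : S.Nonempty := Fintype.piFinset_nonempty.mpr (fun _ => hne)
  have hN : (0:ℝ) < S.card := by exact_mod_cast Finset.card_pos.mpr hS
  set f : Fin m → (Fin n → Bool) → Bool := fun j c =>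
    decide ((S.filter (fun Z => col Z j = c)).card ≤
      2 * ((S.filter (fun Z => col Z j = c)).filter (fun Z => F Z j = true)).card) with hf
  refine ⟨fun Y j => f j (col Y j), ⟨f, fun Y _ j => rfl⟩, ?_⟩
  have hDIj : ∀ j : Fin m, DIj X F j ≤ δ := fun j =>
    le_trans (le_ciSup (Set.Finite.bddAbove (Set.finite_range _)) j) hDI
  -- key pointwise bound
  have key : ∀ j : Fin m, ∀ Y ∈ S, F Y j ≠ f j (col Y j) →
      (1:ℝ)/2 ≤ prob (S.filter (fun Z => col Z j = col Y j)) (fun Z => F Z j ≠ F Y j) := by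
    intro j Y hY hFY
    set T := S.filter (fun Z => col Z j = col Y j) with hT
    have hYT : Y ∈ T := Finset.mem_filter.mpr ⟨hY, rfl⟩
    have hTa : (T.filter (fun Z => F Z j = true)).card ≤ T.card := Finset.card_filter_le _ _
    cases hb : F Y j with
    | true =>
      have hfval : f j (col Y j) = false := by
        cases hfl : f j (col Y j) with
        | false => rfl
        | true => exact absurd (hb.trans hfl.symm) hFY
      have h2 : ¬ (T.card ≤ 2 * (T.filter (fun Z => F Z j = true)).card) := by
        have := hfval
        rw [hf] at this
        simpa [← hT] using of_decide_eq_false this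
      push_neg at h2
      apply half_le_prob _ _ ⟨Y, hYT⟩
      have hfn : T.filter (fun Z => F Z j ≠ true) = T \ T.filter (fun Z => F Z j = true) := by
        simpa using Finset.filter_not (fun Z => F Z j = true) T
      rw [hfn, Finset.card_sdiff_of_subset (Finset.filter_subset _ _)]
      omega
    | false =>
      have hfval : f j (col Y j) = true := by
        cases hfl : f j (col Y j) with
        | true => rfl
        | false => exact absurd (hb.trans hfl.symm) hFY
      have h2 : T.card ≤ 2 * (T.filter (fun Z => F Z j = true)).card := by
        have := hfval
        rw [hf] at this
        simpa [← hT] using of_decide_eq_true this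
      apply half_le_prob _ _ ⟨Y, hYT⟩
      have hc : T.filter (fun Z => F Z j ≠ false) = T.filter (fun Z => F Z j = true) := by
        apply Finset.filter_congr
        intro Z _
        simp
      rw [hc]; exact h2
  -- per-issue count bound
  have hperj : ∀ j : Fin m,
      ((S.filter (fun Y => F Y j ≠ f j (col Y j))).card : ℝ) / S.card ≤ 2 * δ := by
    intro j
    set c := (S.filter (fun Y => F Y j ≠ f j (col Y j))).card with hc
    have h1 : (1:ℝ)/2 * c ≤ ∑ Y ∈ S,
        prob (S.filter (fun Z => col Z j = col Y j)) (fun Z => F Z j ≠ F Y j) := by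
      calc (1:ℝ)/2 * c
          = ∑ _Y ∈ S.filter (fun Y => F Y j ≠ f j (col Y j)), (1:ℝ)/2 := by
            rw [Finset.sum_const, nsmul_eq_mul, mul_comm]
        _ ≤ ∑ Y ∈ S.filter (fun Y => F Y j ≠ f j (col Y j)),
            prob (S.filter (fun Z => col Z j = col Y j)) (fun Z => F Z j ≠ F Y j) := by
            apply Finset.sum_le_sum
            intro Y hY
            have hY' := Finset.mem_filter.mp hY
            exact key j Y hY'.1 hY'.2
        _ ≤ ∑ Y ∈ S, prob (S.filter (fun Z => col Z j = col Y j)) (fun Z => F Z j ≠ F Y j) :=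
            Finset.sum_le_sum_of_subset_of_nonneg (Finset.filter_subset _ _)
              (fun Y _ _ => prob_nonneg _ _)
    have hD : DIj X F j = (∑ Y ∈ S,
        prob (S.filter (fun Z => col Z j = col Y j)) (fun Z => F Z j ≠ F Y j)) / S.card := by
      rw [DIj, ← hSdef]
    have hDle : (c : ℝ) / S.card ≤ 2 * DIj X F j := by
      rw [hD, mul_div_assoc']
      apply div_le_div_of_nonneg_right ?_ hN.le
      linarith
    calc (c : ℝ) / S.card ≤ 2 * DIj X F j := hDle
      _ ≤ 2 * δ := by have := hDIj j; linarith
  -- union bound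
  have hsub : S.filter (fun Y => F Y ≠ fun j => f j (col Y j)) ⊆
      (Finset.univ : Finset (Fin m)).biUnion
        (fun j => S.filter (fun Y => F Y j ≠ f j (col Y j))) := by
    intro Y hY
    have hY' := Finset.mem_filter.mp hY
    obtain ⟨j, hj⟩ := Function.ne_iff.mp hY'.2
    exact Finset.mem_biUnion.mpr ⟨j, Finset.mem_univ j, Finset.mem_filter.mpr ⟨hY'.1, hj⟩⟩
  have hcard : ((S.filter (fun Y => F Y ≠ fun j => f j (col Y j))).card : ℝ)
      ≤ ∑ j : Fin m, ((S.filter (fun Y => F Y j ≠ f j (col Y j))).card : ℝ) := by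
    have := (Finset.card_le_card hsub).trans Finset.card_biUnion_le
    exact_mod_cast this
  have : mdist X F (fun Y j => f j (col Y j))
      ≤ ∑ j : Fin m, ((S.filter (fun Y => F Y j ≠ f j (col Y j))).card : ℝ) / S.card := by
    rw [mdist, prob_eq, ← hSdef, ← Finset.sum_div]
    exact div_le_div_of_nonneg_right hcard hN.le
  calc mdist X F (fun Y j => f j (col Y j))
      ≤ ∑ j : Fin m, ((S.filter (fun Y => F Y j ≠ f j (col Y j))).card : ℝ) / S.card := this
    _ ≤ ∑ _j : Fin m, 2 * δ := Finset.sum_le_sum fun j _ => hperj j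
    _ = 2 * (m:ℝ) * δ := by
        rw [Finset.sum_const, Finset.card_univ, Fintype.card_fin, nsmul_eq_mul]; ring

end JudgementAggregation
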